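/- Suppose B̄, B̄_S, B̄_N, Ḡ_S, Ḡ_N : ℝ → ℝ satisfy: B̄' + 4(B̄_N Ḡ_N + B̄_S Ḡ_S)/Ω² = 0; B̄_S' + f B̄_N + (B̄ Ḡ_S - 2c₀ B̄_N)/Ω² = 0; B̄_N' - f B̄_S + (B̄ Ḡ_N + 2c₀ B̄_S)/Ω² = 0; Ḡ_S' + f Ḡ_N + 2α B̄_S/Ω² = 0; Ḡ_N' - f Ḡ_S + 2α B̄_N/Ω² = 0, where Ω : ℝ → ℝ is positive. Then 2(B̄_N Ḡ_S - B̄_S Ḡ_N) - c₀ B̄ is constant. -/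

import Mathlib

/-- the angular-momentum-type integral (a56):
2(B̄_N Ḡ_S - B̄_S Ḡ_N) - c₀ B̄ is constant. -/
theorem stmt7 (f c₀ α : ℝ) (Bb BbS BbN GbS GbN Ω : ℝ → ℝ) (hΩpos : ∀ t, 0 < Ω t)
    (hBb : ∀ t, HasDerivAt Bb (-(4 * (BbN t * GbN t + BbS t * GbS t) / (Ω t) ^ 2)) t)
    (hBbS : ∀ t, HasDerivAt BbS (-(f * BbN t + (Bb t * GbS t - 2 * c₀ * BbN t) / (Ω t) ^ 2)) t)
    (hBbN : ∀ t, HasDerivAt BbN (-(-(f * BbS t) + (Bb t * GbN t + 2 * c₀ * BbS t) / (Ω t) ^ 2)) t)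
    (hGbS : ∀ t, HasDerivAt GbS (-(f * GbN t + 2 * α * BbS t / (Ω t) ^ 2)) t)
    (hGbN : ∀ t, HasDerivAt GbN (-(-(f * GbS t) + 2 * α * BbN t / (Ω t) ^ 2)) t) :
    ∃ c : ℝ, ∀ t, 2 * (BbN t * GbS t - BbS t * GbN t) - c₀ * Bb t = c := by
  set H : ℝ → ℝ := fun t => 2 * (BbN t * GbS t - BbS t * GbN t) - c₀ * Bb t with hH
  have key : ∀ t, HasDerivAt H 0 t := by
    intro t
    have h := (((((hBbN t).mul (hGbS t)).sub ((hBbS t).mul (hGbN t))).const_mul 2).sub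
      ((hBb t).const_mul c₀))
    refine h.congr_deriv ?_
    have hΩ : (Ω t) ^ 2 ≠ 0 := pow_ne_zero _ (hΩpos t).ne'
    field_simp
    ring
  refine ⟨H 0, fun t => ?_⟩
  have : H = fun _ => H 0 := by
    funext x
    exact (is_const_of_deriv_eq_zero (fun y => (key y).differentiableAt)
      (fun y => (key y).deriv) x 0)
  exact congrFun this t
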